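/- Let G be a connected graph on at least 2 vertices and a a vertex of G. If the largest eigenvalue of the adjacency matrix of G - a is strictly less than λ, then Φ(G, λ) < λ·Φ(G - a, λ), where Φ(H, x) denotes the characteristic polynomial det(xI - A(H)) of the adjacency matrix of H. -/

import Mathlib

open Classical
attribute [local instance] Classical.propDecidable

noncomputable section

/-- The list of eigenvalues of the adjacency matrix of `G` (with multiplicity),
sorted in ascending order. -/
def eigList {V : Type*} [Fintype V] [DecidableEq V] (G : SimpleGraph V) : List ℝ :=
  (Finset.univ.val.map (Matrix.IsHermitian.eigenvalues
    (by
      rw [Matrix.IsHermitian]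
      ext i j
      simp [Matrix.conjTranspose_apply, G.adj_comm j i] : (G.adjMatrix ℝ).IsHermitian))).sort (· ≤ ·)

/-- `lam G k` is the `k`-th largest eigenvalue (1-indexed, with multiplicity)
of the adjacency matrix of `G`; so `lam G 1 = λ₁(G)`, `lam G 2 = λ₂(G)`, etc. -/
def lam {V : Type*} [Fintype V] [DecidableEq V] (G : SimpleGraph V) (k : ℕ) : ℝ :=
  (eigList G).getD (Fintype.card V - k) 0

/-- `Phi G x = det (x I - A(G))`: the characteristic polynomial of the adjacency
matrix of `G`, evaluated at `x`. -/
def Phi {V : Type*} [Fintype V] [DecidableEq V] (G : SimpleGraph V) (x : ℝ) : ℝ :=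
  ((G.adjMatrix ℝ).charpoly).eval x

/-- The graph `G - a` obtained by deleting the vertex `a`. -/
def delVert {V : Type*} (G : SimpleGraph V) (a : V) : SimpleGraph {v : V // v ≠ a} :=
  G.induce {v : V | v ≠ a}

/-- The path graph `P_m` on `m` vertices `0 - 1 - ⋯ - (m-1)`. -/
def pathG (m : ℕ) : SimpleGraph (Fin m) :=
  SimpleGraph.fromRel (fun i j => i.val + 1 = j.val)

/-- The caterpillar `C(ℓ,r,k)`: the path `v_0 v_1 ⋯ v_{ℓ+r}` together with `k`
pendant leaves attached at the vertex `v_ℓ`. -/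
def caterpillar (l r k : ℕ) : SimpleGraph (Fin (l + r + k + 1)) :=
  SimpleGraph.fromRel (fun i j =>
    (i.val + 1 = j.val ∧ j.val ≤ l + r) ∨ (i.val = l ∧ l + r < j.val))

/-- The star `K_{1,n-1}`: vertex `0` adjacent to all other vertices. -/
def starG (n : ℕ) : SimpleGraph (Fin n) :=
  SimpleGraph.fromRel (fun i _ => i.val = 0)

/-- The double star `T(n-3,1)`: adjacent vertices `u = 0`, `v = 1`, where `u` has
the `n - 3` pendant leaves `2, …, n-2` and `v` has the single pendant leaf `n-1`. -/
def doubleStar (n : ℕ) : SimpleGraph (Fin n) :=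
  SimpleGraph.fromRel (fun i j =>
    (i.val = 0 ∧ 1 ≤ j.val ∧ j.val ≤ n - 2) ∨ (i.val = 1 ∧ j.val = n - 1))

/-- The caterpillar `T((n-3)/2, 0, (n-3)/2)`: a path `0 - 1 - 2` with `(n-3)/2`
pendant leaves attached at `0` and `(n-3)/2` pendant leaves attached at `2`. -/
def doubleBroom (n : ℕ) : SimpleGraph (Fin n) :=
  SimpleGraph.fromRel (fun i j =>
    (i.val = 0 ∧ j.val = 1) ∨ (i.val = 1 ∧ j.val = 2) ∨
    (i.val = 0 ∧ 3 ≤ j.val ∧ j.val < 3 + (n - 3) / 2) ∨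
    (i.val = 2 ∧ 3 + (n - 3) / 2 ≤ j.val))

/-- `(G1,a) ∘ (G2,b)`: the disjoint union of `G1` and `G2` together with the edge `ab`. -/
def connectRoots {V1 V2 : Type*} (G1 : SimpleGraph V1) (G2 : SimpleGraph V2) (a : V1) (b : V2) :
    SimpleGraph (V1 ⊕ V2) where
  Adj x y := match x, y with
    | .inl u, .inl v => G1.Adj u v
    | .inr u, .inr v => G2.Adj u v
    | .inl u, .inr v => u = a ∧ v = b
    | .inr u, .inl v => u = b ∧ v = a
  symm := by
    constructor
    rintro (u | u) (v | v) h
    · exact G1.adj_symm h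
    · exact ⟨h.2, h.1⟩
    · exact ⟨h.2, h.1⟩
    · exact G2.adj_symm h
  loopless := by
    constructor
    rintro (u | u) h
    · exact G1.irrefl h
    · exact G2.irrefl h

/-- `(G1,a) ∘ v ∘ (G2,b)`: the disjoint union of `G1` and `G2` together with a new
vertex (`none`) joined to exactly `a` and `b`. -/
def connectViaVertex {V1 V2 : Type*} (G1 : SimpleGraph V1) (G2 : SimpleGraph V2)
    (a : V1) (b : V2) : SimpleGraph (Option (V1 ⊕ V2)) where
  Adj x y := match x, y with
    | some (.inl u), some (.inl v) => G1.Adj u v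
    | some (.inr u), some (.inr v) => G2.Adj u v
    | none, some (.inl u) => u = a
    | some (.inl u), none => u = a
    | none, some (.inr u) => u = b
    | some (.inr u), none => u = b
    | _, _ => False
  symm := by
    constructor
    rintro (_ | (u | u)) (_ | (v | v)) h
    all_goals first
      | exact False.elim h
      | exact h
      | exact G1.adj_symm h
      | exact G2.adj_symm h
  loopless := by
    constructor
    rintro (_ | (u | u)) h
    · exact False.elim h
    · exact G1.irrefl h
    · exact G2.irrefl h

namespace MyAux
open Matrix

variable {n : Type*} [Fintype n] [DecidableEq n]

lemma eval_charpoly (M : Matrix n n ℝ) (x : ℝ) :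
    (M.charpoly).eval x = (x • (1 : Matrix n n ℝ) - M).det := by
  rw [Matrix.charpoly, ← Polynomial.coe_evalRingHom, RingHom.map_det]
  congr 1
  ext i j
  by_cases h : i = j
  · subst h
    simp [charmatrix_apply_eq, Matrix.one_apply]
  · simp [charmatrix_apply_ne _ _ _ h, Matrix.one_apply, h]

lemma posDef_conj {U N : Matrix n n ℝ} (hU : U ∈ Matrix.unitaryGroup n ℝ)
    (hN : N.PosDef) : (U * N * star U).PosDef := by
  have hUU : U * star U = 1 := Matrix.mem_unitaryGroup_iff.mp hU
  refine Matrix.PosDef.of_dotProduct_mulVec_pos ?_ ?_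
  · show (U * N * star U)ᴴ = _
    calc (U * N * star U)ᴴ = (star U)ᴴ * (Nᴴ * Uᴴ) := by
          simp [Matrix.conjTranspose_mul, Matrix.mul_assoc]
      _ = U * N * star U := by
          rw [hN.1]
          simp [Matrix.star_eq_conjTranspose, Matrix.mul_assoc]
  · intro x hx
    set y := star U *ᵥ x with hy
    have hyx : U *ᵥ y = x := by
      rw [hy, Matrix.mulVec_mulVec, hUU, Matrix.one_mulVec]
    have hyne : y ≠ 0 := by
      intro h
      apply hx
      rw [← hyx, h, Matrix.mulVec_zero]
    have key : star x ⬝ᵥ (U * N * star U) *ᵥ x = star y ⬝ᵥ N *ᵥ y := by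
      rw [hy, star_mulVec, show (star U)ᴴ = U from star_star U]
      rw [show U * N * star U = U * (N * star U) from Matrix.mul_assoc _ _ _]
      rw [← Matrix.mulVec_mulVec, dotProduct_mulVec (star x) U]
      rw [Matrix.mulVec_mulVec, dotProduct_mulVec]
    rw [key]
    exact hN.dotProduct_mulVec_pos hyne

lemma posDef_smul_sub {A : Matrix n n ℝ} (hA : A.IsHermitian) {μ : ℝ}
    (h : ∀ i, hA.eigenvalues i < μ) : (μ • (1 : Matrix n n ℝ) - A).PosDef := by
  have hs := hA.spectral_theorem
  rw [Unitary.conjStarAlgAut_apply] at hs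
  set U := (hA.eigenvectorUnitary : Matrix n n ℝ) with hUdef
  have hUmem : U ∈ Matrix.unitaryGroup n ℝ := hA.eigenvectorUnitary.2
  have hUU : U * star U = 1 := Matrix.mem_unitaryGroup_iff.mp hUmem
  have key : μ • (1 : Matrix n n ℝ) - A
      = U * Matrix.diagonal (fun i => μ - hA.eigenvalues i) * star U := by
    have hd : Matrix.diagonal (fun i => μ - hA.eigenvalues i)
        = μ • (1 : Matrix n n ℝ) - Matrix.diagonal (RCLike.ofReal ∘ hA.eigenvalues) := by
      ext i j
      by_cases hij : i = j <;>
        simp [hij, Matrix.diagonal_apply, Matrix.one_apply]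
    rw [hd, Matrix.mul_sub, Matrix.sub_mul, Matrix.mul_smul, Matrix.smul_mul,
      Matrix.mul_one, hUU, ← hs]
  rw [key]
  exact posDef_conj hUmem (Matrix.PosDef.diagonal fun i => sub_pos.mpr (h i))

lemma le_getD_last {l : List ℝ} (hs : l.Pairwise (· ≤ ·)) {x : ℝ} (hx : x ∈ l) :
    x ≤ l.getD (l.length - 1) 0 := by
  obtain ⟨i, rfl⟩ := List.mem_iff_get.mp hx
  have hlen : 0 < l.length := i.pos
  rw [List.getD_eq_getElem l 0 (by omega)]
  have : l[l.length - 1] = l.get ⟨l.length - 1, by omega⟩ := rfl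
  rw [this]
  exact hs.rel_get_of_le (by simp [Fin.le_def]; omega)

end MyAux

lemma adjHerm {V : Type*} [Fintype V] [DecidableEq V] (G : SimpleGraph V) :
    (G.adjMatrix ℝ).IsHermitian := by
  rw [Matrix.IsHermitian]
  ext i j
  simp [Matrix.conjTranspose_apply, G.adj_comm j i]

lemma eig_le_lam1 {V : Type*} [Fintype V] [DecidableEq V] (G : SimpleGraph V) (i : V) :
    (adjHerm G).eigenvalues i ≤ lam G 1 := by
  have hmem : (adjHerm G).eigenvalues i ∈ eigList G := by
    rw [eigList, Multiset.mem_sort]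
    exact Multiset.mem_map.mpr ⟨i, Finset.mem_univ i, rfl⟩
  have hlen : (eigList G).length = Fintype.card V := by
    rw [eigList, Multiset.length_sort, Multiset.card_map]
    exact Finset.card_univ
  have hsorted : (eigList G).Pairwise (· ≤ ·) := by
    rw [eigList]; exact Multiset.pairwise_sort _ _
  rw [lam, ← hlen]
  exact MyAux.le_getD_last hsorted hmem

/-- If `G` is connected on at least 2 vertices and `λ₁(G - a) < μ`,
then `Φ(G, μ) < μ · Φ(G - a, μ)`. -/
theorem stmt_0 {V : Type*} [Fintype V] [DecidableEq V] (G : SimpleGraph V)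
    (hG : G.Connected) (hcard : 2 ≤ Fintype.card V) (a : V) (μ : ℝ)
    (h : lam (delVert G a) 1 < μ) :
    Phi G μ < μ * Phi (delVert G a) μ := by
  classical
  obtain ⟨c, hc⟩ : ∃ c, G.Adj a c := by
    obtain ⟨v, hv⟩ := Fintype.exists_ne_of_one_lt_card (by omega) a
    obtain ⟨w⟩ := hG.preconnected a v
    cases w with
    | nil => exact absurd rfl hv
    | cons h p => exact ⟨_, h⟩
  have hca : c ≠ a := (G.ne_of_adj hc).symm
  set A := G.adjMatrix ℝ with hAdef
  set A' := (delVert G a).adjMatrix ℝ with hA'def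
  set D := μ • (1 : Matrix {v : V // v ≠ a} {v : V // v ≠ a} ℝ) - A' with hDdef
  have hA' : A'.IsHermitian := adjHerm _
  have heig : ∀ i, hA'.eigenvalues i < μ := fun i => lt_of_le_of_lt (eig_le_lam1 _ i) h
  have hD : D.PosDef := MyAux.posDef_smul_sub hA' heig
  haveI : Invertible D := hD.isUnit.invertible
  haveI : Unique {v : V // v = a} := ⟨⟨⟨a, rfl⟩⟩, fun x => Subtype.ext x.2⟩
  set e : {v : V // v = a} ⊕ {v : V // v ≠ a} ≃ V := Equiv.sumCompl (fun v => v = a) with hedef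
  set b : {v : V // v ≠ a} → ℝ := fun i => A a i.val with hbdef
  set P : Matrix {v : V // v = a} {v : V // v = a} ℝ := fun _ _ => μ with hPdef
  set B : Matrix {v : V // v = a} {v : V // v ≠ a} ℝ := fun _ j => - b j with hBdef
  set C : Matrix {v : V // v ≠ a} {v : V // v = a} ℝ := fun i _ => - b i with hCdef
  have hblock : (μ • (1 : Matrix V V ℝ) - A).submatrix e e = Matrix.fromBlocks P B C D := by
    ext i j
    cases i with
    | inl i =>
      cases j with
      | inl j =>
        simp [hedef, hPdef, hAdef, Matrix.fromBlocks, Matrix.one_apply, i.2, j.2, if_neg (G.irrefl (v := a))]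
      | inr j =>
        simp [hedef, hBdef, hbdef, hAdef, Matrix.fromBlocks, Matrix.one_apply, i.2, Ne.symm j.2]
    | inr i =>
      cases j with
      | inl j =>
        simp [hedef, hCdef, hbdef, hAdef, Matrix.fromBlocks, Matrix.one_apply, j.2, i.2, G.adj_comm]
      | inr j =>
        simp [hedef, hDdef, hA'def, hAdef, delVert, Matrix.one_apply, Subtype.ext_iff, SimpleGraph.adjMatrix, Matrix.of_apply]
  have hdet : Phi G μ = D.det * (μ - (B * ⅟D * C) default default) := by
    rw [Phi, MyAux.eval_charpoly, ← Matrix.det_submatrix_equiv_self e, hblock,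
      Matrix.det_fromBlocks₂₂, Matrix.det_unique (P - B * ⅟D * C)]
    rw [show (P - B * ⅟D * C) default default
        = μ - (B * ⅟D * C) default default from by rw [Matrix.sub_apply]]
  have hq : (B * ⅟D * C) default default = dotProduct b (D⁻¹.mulVec b) := by
    rw [Matrix.invOf_eq_nonsing_inv]
    simp only [Matrix.mul_apply]
    simp only [Matrix.mul_apply, dotProduct, Matrix.mulVec, Finset.sum_mul,
      Finset.mul_sum, hBdef, hCdef]
    rw [Finset.sum_comm]
    refine Finset.sum_congr rfl fun i _ => Finset.sum_congr rfl fun j _ => ?_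
    ring
  have hbne : b ≠ 0 := by
    intro h0
    have := congrFun h0 ⟨c, hca⟩
    simp [hbdef, hAdef, hc] at this
  have hqpos : 0 < dotProduct b (D⁻¹.mulVec b) := by
    have := hD.inv.dotProduct_mulVec_pos hbne
    simpa using this
  have hPhi' : Phi (delVert G a) μ = D.det := by
    rw [Phi, MyAux.eval_charpoly, ← hA'def, ← hDdef]
  rw [hdet, hq, hPhi']
  calc D.det * (μ - dotProduct b (D⁻¹.mulVec b)) < D.det * μ :=
        mul_lt_mul_of_pos_left (by linarith) hD.det_pos
    _ = μ * D.det := mul_comm _ _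


end
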